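/- Let (X,d) be a compact metric space equipped with a Borel measure μ with total mass V = μ(X) ∈ (0,∞). Let m ≥ 1 be a natural number and let κ > 0 and 0 < ρ ≤ 1 be constants such that μ(B(x,r)) ≥ κ·r^m·V for every x ∈ X and every 0 < r ≤ ρ (κ-non-collapsing on scales ≤ ρ). Let u : X → ℝ be a continuous function which is 1-Lipschitz with respect to d, let a ≤ 0 be a real number with sup_{x∈X} |u(x) - a| ≤ 2ρ, and set Y = (1/V)·∫_X (u - a)² e^{-u} dμ. Then sup_{x∈X} |u(x) - a| ≤ 2e · κ^{-1/(m+2)} · Y^{1/(m+2)}. -/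

import Mathlib

open MeasureTheory Metric Real

/-- Lemma 2.3 on a compact metric measure space: κ-non-collapsing on scales ≤ ρ, a
1-Lipschitz potential u with |u - a| ≤ 2ρ and a ≤ 0, give the C⁰ bound
`|u - a| ≤ 2e · κ^{-1/(m+2)} · Y^{1/(m+2)}` where `Y = (1/V)∫ (u-a)² e^{-u} dμ`. -/
theorem stmt2 {X : Type*} [MetricSpace X] [CompactSpace X] [MeasurableSpace X]
    [BorelSpace X] (μ : Measure X) [IsFiniteMeasure μ] (hμ : μ Set.univ ≠ 0)
    (m : ℕ) (hm : 1 ≤ m) (κ ρ : ℝ) (hκ : 0 < κ) (hρ0 : 0 < ρ) (hρ1 : ρ ≤ 1)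
    (hnc : ∀ (x : X) (r : ℝ), 0 < r → r ≤ ρ →
      ENNReal.ofReal (κ * r ^ m * (μ Set.univ).toReal) ≤ μ (ball x r))
    (u : X → ℝ) (hu : LipschitzWith 1 u)
    (a : ℝ) (ha : a ≤ 0) (hosc : ∀ x, |u x - a| ≤ 2 * ρ)
    (Y : ℝ)
    (hY : Y = ((μ Set.univ).toReal)⁻¹ *
      ∫ x, (u x - a) ^ 2 * Real.exp (-(u x)) ∂μ) :
    ∀ x, |u x - a| ≤
      2 * Real.exp 1 * κ ^ (-(1:ℝ) / ((m:ℝ) + 2)) * Y ^ ((1:ℝ) / ((m:ℝ) + 2)) := by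
  intro x₀
  set V := (μ Set.univ).toReal with hVdef
  have hVpos : 0 < V := ENNReal.toReal_pos hμ (measure_ne_top μ _)
  set f : X → ℝ := fun x => (u x - a) ^ 2 * Real.exp (-(u x)) with hf
  have hcont : Continuous f := by
    have := hu.continuous
    continuity
  have hInt : Integrable f μ := hcont.integrable_of_hasCompactSupport
    (HasCompactSupport.of_compactSpace f)
  have hfnn : ∀ x, 0 ≤ f x := fun x => mul_nonneg (sq_nonneg _) (Real.exp_pos _).le
  have hY0 : 0 ≤ Y := by
    rw [hY]
    exact mul_nonneg (inv_nonneg.2 ENNReal.toReal_nonneg) (integral_nonneg hfnn)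
  set M := |u x₀ - a| with hM
  have hM0 : 0 ≤ M := abs_nonneg _
  rcases eq_or_lt_of_le hM0 with h0 | hMpos
  · rw [← h0]
    have h1 : (0:ℝ) ≤ κ ^ (-(1:ℝ) / ((m:ℝ) + 2)) := Real.rpow_nonneg hκ.le _
    have h2 : (0:ℝ) ≤ Y ^ ((1:ℝ) / ((m:ℝ) + 2)) := Real.rpow_nonneg hY0 _
    positivity
  -- main case
  set r := M / 2 with hr
  have hrpos : 0 < r := by positivity
  have hrρ : r ≤ ρ := by
    have := hosc x₀
    rw [hr]; linarith [this]
  have hball := hnc x₀ r hrpos hrρ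
  have hBfin : μ (ball x₀ r) ≠ ⊤ := measure_ne_top μ _
  have hBtoReal : κ * r ^ m * V ≤ (μ (ball x₀ r)).toReal := by
    have h1 := ENNReal.toReal_mono hBfin hball
    rwa [ENNReal.toReal_ofReal (by positivity)] at h1
  have hlow : ∀ y ∈ ball x₀ r, r ^ 2 * Real.exp (-2) ≤ f y := by
    intro y hy
    have hd : dist (u y) (u x₀) ≤ dist y x₀ := by
      simpa using hu.dist_le_mul y x₀
    have hy' : dist y x₀ < r := mem_ball.1 hy
    have habs : r ≤ |u y - a| := by
      have h1 : |u y - a| ≥ M - |u y - u x₀| := by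
        have := abs_sub_abs_le_abs_sub (u x₀ - a) (u y - a)
        rw [show u x₀ - a - (u y - a) = -(u y - u x₀) by ring, abs_neg] at this
        linarith
      have hMr : M = 2 * r := by rw [hr]; ring
      rw [Real.dist_eq] at hd
      linarith
    have hsq : r ^ 2 ≤ (u y - a) ^ 2 := by
      have h2 := pow_le_pow_left₀ hrpos.le habs 2
      rw [← sq_abs (u y - a)]
      exact h2
    have hexp : Real.exp (-2) ≤ Real.exp (-(u y)) := by
      apply Real.exp_le_exp.2
      have h1 : u y - a ≤ |u y - a| := le_abs_self _
      have h2 := hosc y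
      linarith
    calc r ^ 2 * Real.exp (-2) ≤ (u y - a) ^ 2 * Real.exp (-2) := by
          apply mul_le_mul_of_nonneg_right hsq (Real.exp_pos _).le
      _ ≤ (u y - a) ^ 2 * Real.exp (-(u y)) :=
          mul_le_mul_of_nonneg_left hexp (sq_nonneg _)
  have hsetint : (r ^ 2 * Real.exp (-2)) * (μ (ball x₀ r)).toReal ≤
      ∫ y in ball x₀ r, f y ∂μ :=
    setIntegral_ge_of_const_le_real measurableSet_ball hBfin hlow hInt.integrableOn
  have hle2 : ∫ y in ball x₀ r, f y ∂μ ≤ ∫ y, f y ∂μ :=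
    setIntegral_le_integral hInt (Filter.Eventually.of_forall hfnn)
  have hYV : Y * V = ∫ y, f y ∂μ := by
    rw [hY]; field_simp
  have hkey : Real.exp (-2) * r ^ (m + 2) * κ * V ≤ Y * V := by
    rw [hYV]
    calc Real.exp (-2) * r ^ (m + 2) * κ * V
        = (r ^ 2 * Real.exp (-2)) * (κ * r ^ m * V) := by rw [pow_add]; ring
      _ ≤ (r ^ 2 * Real.exp (-2)) * (μ (ball x₀ r)).toReal := by
          apply mul_le_mul_of_nonneg_left hBtoReal (by positivity)
      _ ≤ ∫ y in ball x₀ r, f y ∂μ := hsetint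
      _ ≤ ∫ y, f y ∂μ := hle2
  have hkey2 : Real.exp (-2) * r ^ (m + 2) * κ ≤ Y :=
    le_of_mul_le_mul_right hkey hVpos
  have hkey3 : r ^ (m + 2) ≤ Real.exp 2 * Y / κ := by
    rw [Real.exp_neg] at hkey2
    have h := mul_le_mul_of_nonneg_left hkey2 (Real.exp_pos 2).le
    have heq : Real.exp 2 * ((Real.exp 2)⁻¹ * r ^ (m + 2) * κ) = r ^ (m + 2) * κ := by
      field_simp
    rw [le_div_iff₀ hκ]
    linarith
  -- now rpow
  set p : ℝ := (1:ℝ) / ((m:ℝ) + 2) with hp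
  have hmp : ((m:ℝ) + 2) > 0 := by positivity
  have hppos : 0 < p := by positivity
  have hrp : r = (r ^ (m + 2) : ℝ) ^ p := by
    rw [← Real.rpow_natCast r (m+2), ← Real.rpow_mul hrpos.le]
    push_cast
    rw [hp, mul_one_div, div_self hmp.ne', Real.rpow_one]
  have hrle : r ≤ Real.exp 1 * κ ^ (-(1:ℝ) / ((m:ℝ) + 2)) * Y ^ p := by
    rw [hrp]
    calc ((r ^ (m + 2) : ℝ)) ^ p ≤ (Real.exp 2 * Y / κ) ^ p :=
          Real.rpow_le_rpow (by positivity) hkey3 hppos.le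
      _ = (Real.exp 2) ^ p * Y ^ p * (κ ^ p)⁻¹ := by
          rw [div_eq_mul_inv, Real.mul_rpow (by positivity) (by positivity),
            Real.mul_rpow (by positivity) (by positivity),
            ← Real.rpow_neg_one κ, ← Real.rpow_mul hκ.le]
          rw [neg_one_mul, Real.rpow_neg hκ.le]
      _ ≤ Real.exp 1 * Y ^ p * (κ ^ p)⁻¹ := by
          have h1 : (Real.exp 2) ^ p ≤ Real.exp 1 := by
            have h2p : 2 * p ≤ 1 := by
              rw [hp, mul_one_div, div_le_one hmp]; linarith
            calc (Real.exp 2) ^ p = Real.exp (2 * p) := by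
                  rw [← Real.exp_one_rpow 2, ← Real.rpow_mul (Real.exp_pos 1).le,
                    Real.exp_one_rpow]
              _ ≤ Real.exp 1 := Real.exp_le_exp.2 h2p
          apply mul_le_mul_of_nonneg_right
            (mul_le_mul_of_nonneg_right h1 (Real.rpow_nonneg hY0 _))
            (by positivity)
      _ = Real.exp 1 * κ ^ (-(1:ℝ) / ((m:ℝ) + 2)) * Y ^ p := by
          rw [neg_div, Real.rpow_neg hκ.le, hp]
          ring
  calc M = 2 * r := by rw [hr]; ring
    _ ≤ 2 * (Real.exp 1 * κ ^ (-(1:ℝ) / ((m:ℝ) + 2)) * Y ^ p) := by linarith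
    _ = 2 * Real.exp 1 * κ ^ (-(1:ℝ) / ((m:ℝ) + 2)) * Y ^ ((1:ℝ) / ((m:ℝ) + 2)) := by
        rw [hp]; ring
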